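/- Admissibility of cut in ISC: If Γ ⊢ A and Δ,A,Σ ⊢ C are derivable in ISC, then Δ,Γ,Σ ⊢ C is derivable in ISC. -/

import Mathlib

/-- Types built from intersection and a set `K` of type constructors, each
`κ : K` having contravariant arity `c κ` and covariant arity `v κ`. -/
inductive GTy (K : Type) (c v : K → ℕ) : Type
  | inter : GTy K c v → GTy K c v → GTy K c v
  | cons : (κ : K) → (Fin (c κ) → GTy K c v) → (Fin (v κ) → GTy K c v) → GTy K c v

/-- The sequent-style subtyping system ISC, parameterized by the width
function `w` (valued in {0,1}). Sequents `Γ ⊢ A` with `Γ` a list of types. -/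
inductive ISC {K : Type} {c v : K → ℕ} (w : K → ℕ) : List (GTy K c v) → GTy K c v → Prop
  | wk {Γ Δ : List (GTy K c v)} {C : GTy K c v} (κ : K)
      (f : Fin (c κ) → GTy K c v) (g : Fin (v κ) → GTy K c v) :
      ISC w (Γ ++ Δ) C → ISC w (Γ ++ GTy.cons κ f g :: Δ) C
  | interR {Γ : List (GTy K c v)} {A B : GTy K c v} :
      ISC w Γ A → ISC w Γ B → ISC w Γ (GTy.inter A B)
  | interL {Γ Δ : List (GTy K c v)} {A B C : GTy K c v} :
      ISC w (Γ ++ A :: B :: Δ) C → ISC w (Γ ++ GTy.inter A B :: Δ) C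
  | constr (κ : K) (k : ℕ) (hk : w κ ≤ k)
      (As : Fin (c κ) → Fin k → GTy K c v) (Bs : Fin (v κ) → Fin k → GTy K c v)
      (A : Fin (c κ) → GTy K c v) (B : Fin (v κ) → GTy K c v) :
      (∀ j i, ISC w [A j] (As j i)) →
      (∀ j, ISC w (List.ofFn (Bs j)) (B j)) →
      ISC w (List.ofFn fun i => GTy.cons κ (fun j => As j i) (fun j => Bs j i))
        (GTy.cons κ A B)

namespace ISCAux

variable {K : Type} {c v : K → ℕ}

/-- size of a type -/
def gsize : GTy K c v → ℕ
  | .inter A B => gsize A + gsize B + 1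
  | .cons _ f g => (List.ofFn fun i => gsize (f i)).sum + (List.ofFn fun i => gsize (g i)).sum + 1

lemma gsize_arg1 {κ : K} (f : Fin (c κ) → GTy K c v) (g : Fin (v κ) → GTy K c v) (j) :
    gsize (f j) < gsize (GTy.cons κ f g) := by
  have h : gsize (f j) ≤ (List.ofFn fun i => gsize (f i)).sum :=
    List.single_le_sum (fun x _ => Nat.zero_le x) _ (List.mem_ofFn.mpr ⟨j, rfl⟩)
  simp only [gsize]; omega

lemma gsize_arg2 {κ : K} (f : Fin (c κ) → GTy K c v) (g : Fin (v κ) → GTy K c v) (j) :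
    gsize (g j) < gsize (GTy.cons κ f g) := by
  have h : gsize (g j) ≤ (List.ofFn fun i => gsize (g i)).sum :=
    List.single_le_sum (fun x _ => Nat.zero_le x) _ (List.mem_ofFn.mpr ⟨j, rfl⟩)
  simp only [gsize]; omega

/-- height-indexed multiset-context version of ISC -/
inductive ISCm (w : K → ℕ) : ℕ → Multiset (GTy K c v) → GTy K c v → Prop
  | wk {n : ℕ} {S : Multiset (GTy K c v)} {C : GTy K c v} (κ : K)
      (f : Fin (c κ) → GTy K c v) (g : Fin (v κ) → GTy K c v) :
      ISCm w n S C → ISCm w (n+1) (GTy.cons κ f g ::ₘ S) C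
  | interR {n S} {A B : GTy K c v} :
      ISCm w n S A → ISCm w n S B → ISCm w (n+1) S (GTy.inter A B)
  | interL {n S} {A B C : GTy K c v} :
      ISCm w n (A ::ₘ B ::ₘ S) C → ISCm w (n+1) (GTy.inter A B ::ₘ S) C
  | constr {n : ℕ} (κ : K)
      (cols : Multiset ((Fin (c κ) → GTy K c v) × (Fin (v κ) → GTy K c v)))
      (hk : w κ ≤ Multiset.card cols)
      (A : Fin (c κ) → GTy K c v) (B : Fin (v κ) → GTy K c v) :
      (∀ p ∈ cols, ∀ j, ISCm w n {A j} (p.1 j)) →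
      (∀ j, ISCm w n (cols.map fun p => p.2 j) (B j)) →
      ISCm w (n+1) (cols.map fun p => GTy.cons κ p.1 p.2) (GTy.cons κ A B)

variable {w : K → ℕ}

lemma ISCm.mono {n m : ℕ} {S : Multiset (GTy K c v)} {C : GTy K c v}
    (h : ISCm w n S C) (hnm : n ≤ m) : ISCm w m S C := by
  induction h generalizing m with
  | wk κ f g _ ih =>
    obtain ⟨m, rfl⟩ := Nat.exists_eq_add_of_le' (Nat.one_le_iff_ne_zero.mpr (by omega) : 1 ≤ m)
    exact .wk κ f g (ih (by omega))
  | interR _ _ ih1 ih2 =>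
    obtain ⟨m, rfl⟩ := Nat.exists_eq_add_of_le' (Nat.one_le_iff_ne_zero.mpr (by omega) : 1 ≤ m)
    exact .interR (ih1 (by omega)) (ih2 (by omega))
  | interL _ ih =>
    obtain ⟨m, rfl⟩ := Nat.exists_eq_add_of_le' (Nat.one_le_iff_ne_zero.mpr (by omega) : 1 ≤ m)
    exact .interL (ih (by omega))
  | constr κ cols hk A B _ _ ih1 ih2 =>
    obtain ⟨m, rfl⟩ := Nat.exists_eq_add_of_le' (Nat.one_le_iff_ne_zero.mpr (by omega) : 1 ≤ m)
    exact .constr κ cols hk A B (fun p hp j => ih1 p hp j (by omega)) (fun j => ih2 j (by omega))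

/-- uniform bound for finitely many existentials over Fin -/
lemma bdd_fin {m : ℕ} {P : Fin m → ℕ → Prop}
    (mono : ∀ j n n', n ≤ n' → P j n → P j n') (h : ∀ j, ∃ n, P j n) :
    ∃ N, ∀ j, P j N := by
  choose f hf using h
  refine ⟨(Finset.univ.sup f), fun j => mono j _ _ ?_ (hf j)⟩
  exact Finset.le_sup (Finset.mem_univ j)

/-- uniform bound over members of a multiset -/
lemma bdd_mem {α : Type*} {s : Multiset α} {P : α → ℕ → Prop}
    (mono : ∀ a n n', n ≤ n' → P a n → P a n') (h : ∀ a ∈ s, ∃ n, P a n) :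
    ∃ N, ∀ a ∈ s, P a N := by
  induction s using Multiset.induction with
  | empty => exact ⟨0, by simp⟩
  | cons a s ih =>
    obtain ⟨N, hN⟩ := ih (fun a ha => h a (Multiset.mem_cons_of_mem ha))
    obtain ⟨n, hn⟩ := h a (Multiset.mem_cons_self a s)
    refine ⟨max N n, fun b hb => ?_⟩
    rcases Multiset.mem_cons.mp hb with rfl | hb
    · exact mono _ _ _ (le_max_right _ _) hn
    · exact mono _ _ _ (le_max_left _ _) (hN b hb)

end ISCAux

namespace ISCAux
variable {K : Type} {c v : K → ℕ} {w : K → ℕ}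

/-- factor a permutation through a map -/
lemma perm_map_factor {α β : Type*} (f : α → β) :
    ∀ (l₁ : List β) (l₂ : List α), l₁.Perm (l₂.map f) →
      ∃ l₃ : List α, l₃.Perm l₂ ∧ l₃.map f = l₁ := by
  intro l₁
  induction l₁ with
  | nil => intro l₂ h; rw [List.nil_perm] at h
           exact ⟨[], by simp [List.map_eq_nil_iff] at h; simp [h], rfl⟩
  | cons x Γ' ih =>
    intro l₂ h
    have hx : x ∈ l₂.map f := h.mem_iff.mp (List.mem_cons_self (a := x) (l := Γ'))
    obtain ⟨p, hp, rfl⟩ := List.mem_map.mp hx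
    classical
    have hperm : l₂.Perm (p :: l₂.erase p) := List.perm_cons_erase hp
    have h2 : (f p :: Γ').Perm (f p :: (l₂.erase p).map f) :=
      h.trans (hperm.map f)
    obtain ⟨l₃, hl₃, hmap⟩ := ih (l₂.erase p) h2.cons_inv
    exact ⟨p :: l₃, ((hl₃.cons p).trans hperm.symm), by simp [hmap]⟩

lemma toISCm {Γ : List (GTy K c v)} {A : GTy K c v} (h : ISC w Γ A) :
    ∃ n, ISCm w n (↑Γ) A := by
  induction h with
  | @wk Γ Δ C κ f g _ ih =>
    obtain ⟨n, hn⟩ := ih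
    refine ⟨n+1, ?_⟩
    have : (↑(Γ ++ GTy.cons κ f g :: Δ) : Multiset (GTy K c v)) =
        GTy.cons κ f g ::ₘ ↑(Γ ++ Δ) := Multiset.coe_eq_coe.mpr List.perm_middle
    rw [this]; exact .wk κ f g hn
  | interR _ _ ih1 ih2 =>
    obtain ⟨n1, h1⟩ := ih1; obtain ⟨n2, h2⟩ := ih2
    exact ⟨max n1 n2 + 1, .interR (h1.mono (le_max_left _ _)) (h2.mono (le_max_right _ _))⟩
  | @interL Γ Δ A B C _ ih =>
    obtain ⟨n, hn⟩ := ih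
    refine ⟨n+1, ?_⟩
    have e1 : (↑(Γ ++ GTy.inter A B :: Δ) : Multiset (GTy K c v)) =
        GTy.inter A B ::ₘ ↑(Γ ++ Δ) := Multiset.coe_eq_coe.mpr List.perm_middle
    have e2 : (↑(Γ ++ A :: B :: Δ) : Multiset (GTy K c v)) =
        A ::ₘ B ::ₘ ↑(Γ ++ Δ) := by
      refine Multiset.coe_eq_coe.mpr ?_
      exact List.perm_middle.trans ((List.perm_middle).cons A)
    rw [e1]; exact .interL (e2 ▸ hn)
  | constr κ k hk As Bs A B hA hB ihA ihB =>
    have hbA : ∃ N, ∀ j : Fin (c κ), ∀ i : Fin k, ISCm w N {A j} (As j i) := by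
      apply bdd_fin (P := fun j N => ∀ i, ISCm w N {A j} (As j i))
        (fun j n n' hle h i => by exact (h i).mono hle)
      intro j
      apply bdd_fin (P := fun i N => ISCm w N {A j} (As j i))
        (fun i n n' hle h => by exact h.mono hle)
      intro i; simpa using ihA j i
    obtain ⟨N1, hN1⟩ := hbA
    obtain ⟨N2, hN2⟩ := bdd_fin (P := fun j N => ISCm w N (↑(List.ofFn (Bs j))) (B j))
      (fun j n n' hle h => by exact h.mono hle) ihB
    set cols : Multiset ((Fin (c κ) → GTy K c v) × (Fin (v κ) → GTy K c v)) :=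
      ↑(List.ofFn fun i => ((fun j => As j i), (fun j => Bs j i))) with hcols
    refine ⟨max N1 N2 + 1, ?_⟩
    have e1 : (↑(List.ofFn fun i => GTy.cons κ (fun j => As j i) (fun j => Bs j i))
        : Multiset (GTy K c v)) = cols.map fun p => GTy.cons κ p.1 p.2 := by
      rw [hcols, Multiset.map_coe, List.map_ofFn]; rfl
    rw [e1]
    refine .constr κ cols ?_ A B ?_ ?_
    · rw [hcols]; simpa using hk
    · intro p hp j
      rw [hcols] at hp
      obtain ⟨i, rfl⟩ := List.mem_ofFn.mp hp
      exact (hN1 j i).mono (le_max_left _ _)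
    · intro j
      have e2 : cols.map (fun p => p.2 j) = ↑(List.ofFn (Bs j)) := by
        rw [hcols, Multiset.map_coe, List.map_ofFn]; rfl
      rw [e2]; exact (hN2 j).mono (le_max_right _ _)

lemma ofISCm {n : ℕ} {S : Multiset (GTy K c v)} {C : GTy K c v} (h : ISCm w n S C) :
    ∀ Γ : List (GTy K c v), (↑Γ : Multiset _) = S → ISC w Γ C := by
  induction h with
  | @wk n S C κ f g _ ih =>
    intro Γ hΓ
    have hmem : GTy.cons κ f g ∈ Γ := by
      have : GTy.cons κ f g ∈ (↑Γ : Multiset _) := by rw [hΓ]; exact Multiset.mem_cons_self _ _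
      simpa using this
    obtain ⟨Γ₁, Γ₂, rfl⟩ := List.append_of_mem hmem
    have e : (↑(Γ₁ ++ GTy.cons κ f g :: Γ₂) : Multiset (GTy K c v)) =
        GTy.cons κ f g ::ₘ ↑(Γ₁ ++ Γ₂) := Multiset.coe_eq_coe.mpr List.perm_middle
    rw [e] at hΓ
    exact ISC.wk κ f g (ih _ ((Multiset.cons_inj_right _).mp hΓ))
  | interR _ _ ih1 ih2 => intro Γ hΓ; exact .interR (ih1 Γ hΓ) (ih2 Γ hΓ)
  | @interL n S A B C _ ih =>
    intro Γ hΓ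
    have hmem : GTy.inter A B ∈ Γ := by
      have : GTy.inter A B ∈ (↑Γ : Multiset _) := by rw [hΓ]; exact Multiset.mem_cons_self _ _
      simpa using this
    obtain ⟨Γ₁, Γ₂, rfl⟩ := List.append_of_mem hmem
    have e : (↑(Γ₁ ++ GTy.inter A B :: Γ₂) : Multiset (GTy K c v)) =
        GTy.inter A B ::ₘ ↑(Γ₁ ++ Γ₂) := Multiset.coe_eq_coe.mpr List.perm_middle
    rw [e] at hΓ
    have hS := (Multiset.cons_inj_right _).mp hΓ
    refine ISC.interL (ih (Γ₁ ++ A :: B :: Γ₂) ?_)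
    have e2 : (↑(Γ₁ ++ A :: B :: Γ₂) : Multiset (GTy K c v)) = A ::ₘ B ::ₘ ↑(Γ₁ ++ Γ₂) := by
      refine Multiset.coe_eq_coe.mpr ?_
      exact List.perm_middle.trans ((List.perm_middle).cons A)
    rw [e2, hS]
  | @constr n κ cols hk A B _ _ ih1 ih2 =>
    intro Γ hΓ
    have hL : (↑(cols.toList) : Multiset _) = cols := Multiset.coe_toList cols
    have hperm : Γ.Perm ((cols.toList).map fun p => GTy.cons κ p.1 p.2) := by
      rw [← Multiset.coe_eq_coe, ← Multiset.map_coe, hL, hΓ]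
    obtain ⟨L, hLperm, hLmap⟩ := perm_map_factor _ _ _ hperm
    have hLcols : (↑L : Multiset _) = cols := by
      rw [← hL, Multiset.coe_eq_coe]; exact hLperm
    have hmem : ∀ i : Fin L.length, L.get i ∈ cols := by
      intro i; rw [← hLcols]
      exact Multiset.mem_coe.mpr (by simpa using L.get_mem i.1 i.2)
    have hgoal := ISC.constr (w := w) κ L.length (by rw [← hLcols] at hk; simpa using hk)
      (fun j i => (L.get i).1 j) (fun j i => (L.get i).2 j) A B
      (fun j i => ih1 _ (hmem i) j [A j] rfl)
      (fun j => ih2 j (List.ofFn fun i => (L.get i).2 j) (by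
        rw [← hLcols, Multiset.map_coe, Multiset.coe_eq_coe]
        have : (List.ofFn fun i => (L.get i).2 j) = L.map fun p => p.2 j := by
          conv_rhs => rw [← List.ofFn_get L]
          rw [List.map_ofFn]; rfl
        rw [this]))
    have : (List.ofFn fun i => GTy.cons κ (fun j => (L.get i).1 j) fun j => (L.get i).2 j) = Γ := by
      rw [← hLmap]
      conv_rhs => rw [← List.ofFn_get L]
      rw [List.map_ofFn]; rfl
    rwa [this] at hgoal

end ISCAux

namespace ISCAux
variable {K : Type} {c v : K → ℕ} {w : K → ℕ}

/-- invertibility of ∩R, height-preserving -/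
lemma interR_inv {n : ℕ} {S : Multiset (GTy K c v)} {A B : GTy K c v}
    (h : ISCm w n S (GTy.inter A B)) : ISCm w n S A ∧ ISCm w n S B := by
  generalize hX : GTy.inter A B = X at h
  induction h with
  | wk κ f g _ ih =>
    obtain ⟨h1, h2⟩ := ih hX
    exact ⟨.wk κ f g h1, .wk κ f g h2⟩
  | interR h1 h2 =>
    cases hX
    exact ⟨h1.mono (Nat.le_succ _), h2.mono (Nat.le_succ _)⟩
  | interL _ ih =>
    obtain ⟨h1, h2⟩ := ih hX
    exact ⟨.interL h1, .interL h2⟩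
  | constr κ cols hk A' B' _ _ _ _ => cases hX

/-- invertibility of ∩L, height-preserving -/
lemma interL_inv : ∀ {n : ℕ} {T : Multiset (GTy K c v)} {C : GTy K c v},
    ISCm w n T C → ∀ {A B : GTy K c v} {S : Multiset (GTy K c v)},
      T = GTy.inter A B ::ₘ S → ISCm w n (A ::ₘ B ::ₘ S) C := by
  intro n
  induction n using Nat.strong_induction_on with
  | _ n ih =>
    intro T C h A B S hT
    cases h with
    | @wk m S₀ _ κ f g h0 =>
      rcases Multiset.cons_eq_cons.mp hT with ⟨heq, _⟩ | ⟨hne, u, hS₀, hS⟩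
      · exact absurd heq (by simp)
      · subst hS
        have h1 := ih m (Nat.lt_succ_self _) h0 hS₀
        have h2 : ISCm w (m+1) (GTy.cons κ f g ::ₘ A ::ₘ B ::ₘ u) C := .wk κ f g h1
        have e : GTy.cons κ f g ::ₘ A ::ₘ B ::ₘ u = A ::ₘ B ::ₘ GTy.cons κ f g ::ₘ u := by
          rw [Multiset.cons_swap (GTy.cons κ f g) A, Multiset.cons_swap (GTy.cons κ f g) B]
        rwa [e] at h2
    | @interR m _ A1 B1 h1 h2 =>
      subst hT
      exact .interR (ih m (Nat.lt_succ_self _) h1 rfl) (ih m (Nat.lt_succ_self _) h2 rfl)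
    | @interL m S₀ A' B' _ h0 =>
      rcases Multiset.cons_eq_cons.mp hT with ⟨heq, hST⟩ | ⟨hne, u, hS₀, hS⟩
      · obtain ⟨rfl, rfl⟩ : A' = A ∧ B' = B := by
          injection heq with e1 e2; exact ⟨e1, e2⟩
        rw [hST] at h0
        exact h0.mono (Nat.le_succ _)
      · subst hS
        have h1 := ih m (Nat.lt_succ_self _) h0 (show A' ::ₘ B' ::ₘ S₀ = GTy.inter A B ::ₘ (A' ::ₘ B' ::ₘ u) by
          rw [hS₀, Multiset.cons_swap B' (GTy.inter A B), Multiset.cons_swap A' (GTy.inter A B)])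
        have h2 : ISCm w (m+1) (GTy.inter A' B' ::ₘ A ::ₘ B ::ₘ u) C := .interL (by
          have e : A' ::ₘ B' ::ₘ A ::ₘ B ::ₘ u = A ::ₘ B ::ₘ A' ::ₘ B' ::ₘ u := by
            rw [Multiset.cons_swap B' A, Multiset.cons_swap A' A,
                Multiset.cons_swap B' B, Multiset.cons_swap A' B]
          rw [e]; exact h1)
        have e : GTy.inter A' B' ::ₘ A ::ₘ B ::ₘ u = A ::ₘ B ::ₘ GTy.inter A' B' ::ₘ u := by
          rw [Multiset.cons_swap (GTy.inter A' B') A, Multiset.cons_swap (GTy.inter A' B') B]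
        rwa [e] at h2
    | constr κ cols hk A' B' p1 p2 =>
      exfalso
      have : GTy.inter A B ∈ Multiset.map (fun p => GTy.cons κ p.1 p.2) cols := by
        rw [hT]; exact Multiset.mem_cons_self _ _
      obtain ⟨p, _, hp⟩ := Multiset.mem_map.mp this
      exact absurd hp (by simp)

/-- weakening by a single formula -/
lemma weak1 (X : GTy K c v) {n : ℕ} {S : Multiset (GTy K c v)} {C : GTy K c v}
    (h : ISCm w n S C) : ∃ m, ISCm w m (X ::ₘ S) C := by
  induction X generalizing n S C with
  | inter A B ihA ihB =>
    obtain ⟨m1, h1⟩ := ihA h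
    obtain ⟨m2, h2⟩ := ihB h1
    refine ⟨m2 + 1, .interL ?_⟩
    rwa [Multiset.cons_swap]
  | cons κ f g _ _ => exact ⟨n+1, .wk κ f g h⟩

/-- weakening by a multiset -/
lemma weakM (T : Multiset (GTy K c v)) {n : ℕ} {S : Multiset (GTy K c v)} {C : GTy K c v}
    (h : ISCm w n S C) : ∃ m, ISCm w m (T + S) C := by
  induction T using Multiset.induction with
  | empty => exact ⟨n, by simpa using h⟩
  | cons X T ih =>
    obtain ⟨m, hm⟩ := ih
    obtain ⟨m', hm'⟩ := weak1 X hm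
    exact ⟨m', by simpa using hm'⟩

end ISCAux

namespace ISCAux
variable {K : Type} {c v : K → ℕ} {w : K → ℕ}

theorem contra (hw : ∀ κ, w κ ≤ 1) (X : GTy K c v) (n : ℕ)
    (S : Multiset (GTy K c v)) {T : Multiset (GTy K c v)} {C : GTy K c v}
    (h : ISCm w n T C) (hT : T = X ::ₘ X ::ₘ S) :
    ∃ m, ISCm w m (X ::ₘ S) C := by
  cases h with
  | @wk m S₀ _ κ f g h0 =>
    rcases Multiset.cons_eq_cons.mp hT with ⟨heq, hS₀⟩ | ⟨hne, u, hS₀, htail⟩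
    · exact ⟨m, hS₀ ▸ h0⟩
    · rcases Multiset.cons_eq_cons.mp htail with ⟨heq2, _⟩ | ⟨_, u', hS, hu⟩
      · exact absurd heq2.symm hne
      · obtain ⟨m', hm'⟩ := contra hw X m u' h0 (by rw [hS₀, hu])
        refine ⟨m'+1, ?_⟩
        have h2 : ISCm w (m'+1) (GTy.cons κ f g ::ₘ X ::ₘ u') C := .wk κ f g hm'
        rwa [Multiset.cons_swap, ← hS] at h2
  | @interR m _ A1 B1 h1 h2 =>
    obtain ⟨m1, hm1⟩ := contra hw X m S h1 hT
    obtain ⟨m2, hm2⟩ := contra hw X m S h2 hT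
    exact ⟨max m1 m2 + 1, .interR (hm1.mono (le_max_left _ _)) (hm2.mono (le_max_right _ _))⟩
  | @interL m S₀ A B _ h0 =>
    rcases Multiset.cons_eq_cons.mp hT with ⟨heq, hS₀⟩ | ⟨hne, u, hS₀, htail⟩
    · subst heq
      have h1 : ISCm w m (A ::ₘ B ::ₘ A ::ₘ B ::ₘ S) C := by
        refine interL_inv h0 ?_
        rw [hS₀, Multiset.cons_swap B (GTy.inter A B), Multiset.cons_swap A (GTy.inter A B)]
      obtain ⟨m1, hm1⟩ := contra hw A m (B ::ₘ B ::ₘ S) h1 (by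
        simp only [← Multiset.singleton_add]; abel)
      obtain ⟨m2, hm2⟩ := contra hw B m1 (A ::ₘ S) hm1 (by
        simp only [← Multiset.singleton_add]; abel)
      refine ⟨m2+1, .interL ?_⟩
      rwa [Multiset.cons_swap B A] at hm2
    · rcases Multiset.cons_eq_cons.mp htail with ⟨heq2, _⟩ | ⟨_, u', hS, hu⟩
      · exact absurd heq2.symm hne
      · obtain ⟨m', hm'⟩ := contra hw X m (A ::ₘ B ::ₘ u') h0 (by
          rw [hS₀, hu]; simp only [← Multiset.singleton_add]; abel)
        refine ⟨m'+1, ?_⟩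
        have h2 : ISCm w (m'+1) (GTy.inter A B ::ₘ X ::ₘ u') C := .interL (by
          have e : A ::ₘ B ::ₘ X ::ₘ u' = X ::ₘ A ::ₘ B ::ₘ u' := by
            rw [Multiset.cons_swap B X, Multiset.cons_swap A X]
          rw [e]; exact hm')
        rwa [Multiset.cons_swap, ← hS] at h2
  | @constr m κ cols hk A B p1 p2 =>
    have hX1 : X ∈ Multiset.map (fun p => GTy.cons κ p.1 p.2) cols := by
      rw [hT]; exact Multiset.mem_cons_self _ _
    obtain ⟨q1, hq1mem, hq1⟩ := Multiset.mem_map.mp hX1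
    obtain ⟨cols₁, hcols₁⟩ := Multiset.exists_cons_of_mem hq1mem
    have hmap1 : Multiset.map (fun p => GTy.cons κ p.1 p.2) cols₁ = X ::ₘ S := by
      have := hT
      rw [hcols₁, Multiset.map_cons, hq1] at this
      exact (Multiset.cons_inj_right _).mp this
    have hX2 : X ∈ Multiset.map (fun p => GTy.cons κ p.1 p.2) cols₁ := by
      rw [hmap1]; exact Multiset.mem_cons_self _ _
    obtain ⟨q2, hq2mem, hq2⟩ := Multiset.mem_map.mp hX2
    obtain ⟨cols₂, hcols₂⟩ := Multiset.exists_cons_of_mem hq2mem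
    have hmap2 : Multiset.map (fun p => GTy.cons κ p.1 p.2) cols₂ = S := by
      have := hmap1
      rw [hcols₂, Multiset.map_cons, hq2] at this
      exact (Multiset.cons_inj_right _).mp this
    have hq12 : q1 = q2 := by
      have := hq1.trans hq2.symm
      injection this with _ e1 e2
      exact Prod.ext (by exact e1) (by exact e2)
    subst hq12
    -- contract covariant premises
    have hcov : ∀ j : Fin (v κ), ∃ mj, ISCm w mj
        (q1.2 j ::ₘ Multiset.map (fun p => p.2 j) cols₂) (B j) := by
      intro j
      refine contra hw (q1.2 j) m (Multiset.map (fun p => p.2 j) cols₂) (p2 j) ?_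
      rw [hcols₁, hcols₂, Multiset.map_cons, Multiset.map_cons]
    obtain ⟨N, hN⟩ := bdd_fin (P := fun j mj => ISCm w mj
        (q1.2 j ::ₘ Multiset.map (fun p => p.2 j) cols₂) (B j))
      (fun j a b hle hh => by exact hh.mono hle) hcov
    refine ⟨max N m + 1, ?_⟩
    have hgoal := ISCm.constr (w := w) (n := max N m) κ (q1 ::ₘ cols₂)
      (by
        have h1 : (1:ℕ) ≤ Multiset.card (q1 ::ₘ cols₂) := by simp
        exact le_trans (hw κ) h1)
      A B
      (fun p hp j => by
        rcases Multiset.mem_cons.mp hp with rfl | hp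
        · exact (p1 p (by rw [hcols₁]; exact Multiset.mem_cons_self _ _) j).mono (le_max_right _ _)
        · exact (p1 p (by
            rw [hcols₁, hcols₂]
            exact Multiset.mem_cons_of_mem (Multiset.mem_cons_of_mem hp)) j).mono
            (le_max_right _ _))
      (fun j => by
        rw [Multiset.map_cons]
        exact (hN j).mono (le_max_left _ _))
    rw [Multiset.map_cons, hq1, hmap2] at hgoal
    exact hgoal
termination_by (gsize X, n)
decreasing_by
  all_goals
    first
      | exact Prod.Lex.right _ (by omega)
      | exact Prod.Lex.left _ _ (by rw [← heq]; simp only [gsize]; omega)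
      | exact Prod.Lex.left _ _ (by rw [← hq1]; exact gsize_arg2 _ _ _)

/-- multiset contraction -/
theorem contraM (hw : ∀ κ, w κ ≤ 1) (S : Multiset (GTy K c v)) :
    ∀ {n : ℕ} {T : Multiset (GTy K c v)} {C : GTy K c v},
    ISCm w n (S + S + T) C → ∃ m, ISCm w m (S + T) C := by
  induction S using Multiset.induction with
  | empty => intro n T C h; exact ⟨n, by simpa using h⟩
  | cons x S ih =>
    intro n T C h
    have e : (x ::ₘ S) + (x ::ₘ S) + T = x ::ₘ x ::ₘ (S + S + T) := by
      simp only [← Multiset.singleton_add]; abel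
    rw [e] at h
    obtain ⟨m1, hm1⟩ := contra hw x n (S + S + T) h rfl
    have e2 : x ::ₘ (S + S + T) = S + S + (x ::ₘ T) := by
      simp only [← Multiset.singleton_add]; abel
    rw [e2] at hm1
    obtain ⟨m2, hm2⟩ := ih hm1
    exact ⟨m2, by rwa [show S + (x ::ₘ T) = (x ::ₘ S) + T by
      simp only [← Multiset.singleton_add]; abel] at hm2⟩

end ISCAux

namespace ISCAux
variable {K : Type} {c v : K → ℕ} {w : K → ℕ}

lemma lex3 {a a' b b' cc cc' : ℕ}
    (h : a < a' ∨ (a = a' ∧ (b < b' ∨ (b = b' ∧ cc < cc')))) :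
    Prod.Lex (· < ·) (Prod.Lex (· < ·) (· < ·)) (a, (b, cc)) (a', (b', cc')) := by
  rcases h with h | ⟨rfl, h | ⟨rfl, h⟩⟩
  · exact Prod.Lex.left _ _ h
  · exact Prod.Lex.right _ (Prod.Lex.left _ _ h)
  · exact Prod.Lex.right _ (Prod.Lex.right _ h)

theorem cutM (hw : ∀ κ, w κ ≤ 1) (X : GTy K c v) (n₁ n₂ : ℕ)
    (S T : Multiset (GTy K c v)) {T' : Multiset (GTy K c v)} {C : GTy K c v}
    (h1 : ISCm w n₁ S X) (h2 : ISCm w n₂ T' C) (hT' : T' = X ::ₘ T) :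
    ∃ m, ISCm w m (S + T) C := by
  have h2copy := h2
  cases h2 with
  | @wk m T₀ _ κ f g h0 =>
    rcases Multiset.cons_eq_cons.mp hT' with ⟨heq, hT₀⟩ | ⟨hne, u, hT₀, hTt⟩
    · exact weakM S (hT₀ ▸ h0)
    · obtain ⟨m', hm'⟩ := cutM hw X n₁ m S u h1 h0 hT₀
      refine ⟨m'+1, ?_⟩
      have hgoal : ISCm w (m'+1) (GTy.cons κ f g ::ₘ (S + u)) C := .wk κ f g hm'
      rwa [show GTy.cons κ f g ::ₘ (S + u) = S + T by
        rw [hTt]; simp only [← Multiset.singleton_add]; abel] at hgoal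
  | @interR m _ A1 B1 ha hb =>
    obtain ⟨ma, hma⟩ := cutM hw X n₁ m S T h1 ha hT'
    obtain ⟨mb, hmb⟩ := cutM hw X n₁ m S T h1 hb hT'
    exact ⟨max ma mb + 1, .interR (hma.mono (le_max_left _ _)) (hmb.mono (le_max_right _ _))⟩
  | @interL m S₀ A B _ h0 =>
    rcases Multiset.cons_eq_cons.mp hT' with ⟨heq, hS₀⟩ | ⟨hne, u, hS₀, hTt⟩
    · obtain ⟨h1a, h1b⟩ := interR_inv (heq ▸ h1)
      obtain ⟨mA, hmA⟩ := cutM hw A n₁ m S (B ::ₘ T) h1a h0 (by rw [hS₀])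
      obtain ⟨mB, hmB⟩ := cutM hw B n₁ mA S (S + T) h1b hmA (by
        simp only [← Multiset.singleton_add]; abel)
      have e : S + (S + T) = S + S + T := by rw [add_assoc]
      rw [e] at hmB
      exact contraM hw S hmB
    · obtain ⟨m', hm'⟩ := cutM hw X n₁ m S (A ::ₘ B ::ₘ u) h1 h0 (by
        rw [hS₀]; simp only [← Multiset.singleton_add]; abel)
      refine ⟨m'+1, ?_⟩
      have hgoal : ISCm w (m'+1) (GTy.inter A B ::ₘ (S + u)) C := .interL (by
        rwa [show A ::ₘ B ::ₘ (S + u) = S + (A ::ₘ B ::ₘ u) by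
          simp only [← Multiset.singleton_add]; abel])
      rwa [show GTy.inter A B ::ₘ (S + u) = S + T by
        rw [hTt]; simp only [← Multiset.singleton_add]; abel] at hgoal
  | @constr m κ cols hk A B p1 p2 =>
    have hX : X ∈ Multiset.map (fun p => GTy.cons κ p.1 p.2) cols := by
      rw [hT']; exact Multiset.mem_cons_self _ _
    obtain ⟨q0, hq0mem, hq0⟩ := Multiset.mem_map.mp hX
    subst hq0
    obtain ⟨cols', hcols'⟩ := Multiset.exists_cons_of_mem hq0mem
    have hmapT : Multiset.map (fun p => GTy.cons κ p.1 p.2) cols' = T := by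
      have := hT'
      rw [hcols', Multiset.map_cons] at this
      exact (Multiset.cons_inj_right _).mp this
    cases h1 with
    | @wk m₁ S₀ _ κ' f' g' h1' =>
      obtain ⟨m', hm'⟩ := cutM hw (GTy.cons κ q0.1 q0.2) m₁ (m+1) S₀ T h1' h2copy hT'
      refine ⟨m'+1, ?_⟩
      have hgoal := ISCm.wk (w := w) κ' f' g' hm'
      rwa [show GTy.cons κ' f' g' ::ₘ (S₀ + T) = GTy.cons κ' f' g' ::ₘ S₀ + T by
        simp only [← Multiset.singleton_add]; abel] at hgoal
    | @interL m₁ S₀ A' B' _ h1' =>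
      obtain ⟨m', hm'⟩ := cutM hw (GTy.cons κ q0.1 q0.2) m₁ (m+1) (A' ::ₘ B' ::ₘ S₀) T h1' h2copy hT'
      refine ⟨m'+1, ?_⟩
      have hgoal := ISCm.interL (w := w) (S := S₀ + T) (A := A') (B := B') (by
        rwa [show A' ::ₘ B' ::ₘ (S₀ + T) = A' ::ₘ B' ::ₘ S₀ + T by
          simp only [← Multiset.singleton_add]; abel])
      rwa [show GTy.inter A' B' ::ₘ (S₀ + T) = GTy.inter A' B' ::ₘ S₀ + T by
        simp only [← Multiset.singleton_add]; abel] at hgoal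
    | @constr m₁ κ₂ cols₂ hk₂ A₂ B₂ q1 q2 =>
      -- contravariant premises for the new columns coming from `cols₂`
      have hcontra : ∀ p ∈ cols₂, ∀ j : Fin (c κ), ∃ mm, ISCm w mm {A j} (p.1 j) := by
        intro p hp j
        obtain ⟨mm, hmm⟩ := cutM hw (q0.1 j) m m₁ {A j} 0
          (p1 q0 (by rw [hcols']; exact Multiset.mem_cons_self _ _) j)
          (q1 p hp j) rfl
        exact ⟨mm, by simpa using hmm⟩
      obtain ⟨N₁, hN₁⟩ := bdd_mem
        (P := fun p N => ∀ j : Fin (c κ), ISCm w N {A j} (p.1 j))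
        (fun p a b hle hh j => by exact (hh j).mono hle)
        (fun p hp => bdd_fin (fun j a b hle hh => by exact hh.mono hle) (hcontra p hp))
      -- covariant premises
      have hcov : ∀ j : Fin (v κ), ∃ mm, ISCm w mm
          (Multiset.map (fun p => p.2 j) (cols₂ + cols')) (B j) := by
        intro j
        obtain ⟨mm, hmm⟩ := cutM hw (q0.2 j) m₁ m
          (Multiset.map (fun p => p.2 j) cols₂) (Multiset.map (fun p => p.2 j) cols')
          (q2 j) (p2 j) (by rw [hcols', Multiset.map_cons])
        exact ⟨mm, by rwa [Multiset.map_add]⟩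
      obtain ⟨N₂, hN₂⟩ := bdd_fin
        (P := fun j N => ISCm w N (Multiset.map (fun p => p.2 j) (cols₂ + cols')) (B j))
        (fun j a b hle hh => by exact hh.mono hle) hcov
      set N := max N₁ (max N₂ m) with hN
      refine ⟨N + 1, ?_⟩
      have hgoal := ISCm.constr (w := w) (n := N) κ (cols₂ + cols')
        (le_trans hk₂ (by simp))
        A B
        (fun p hp j => by
          rcases Multiset.mem_add.mp hp with hp | hp
          · exact (hN₁ p hp j).mono (le_max_left _ _)
          · refine (p1 p ?_ j).mono (le_trans (le_max_right N₂ m) (le_max_right N₁ _))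
            rw [hcols']; exact Multiset.mem_cons_of_mem hp)
        (fun j => (hN₂ j).mono (le_trans (le_max_left N₂ m) (le_max_right N₁ _)))
      rwa [Multiset.map_add, hmapT] at hgoal
termination_by (gsize X, n₂, n₁)
decreasing_by
  all_goals
    subst_vars
    apply lex3
    first
      | omega
      | (left; simp only [gsize]; omega)
      | (left; exact gsize_arg1 _ _ _)
      | (left; exact gsize_arg2 _ _ _)

end ISCAux

/-- Admissibility of cut in ISC: if `Γ ⊢ A` and `Δ, A, Σ ⊢ C`
then `Δ, Γ, Σ ⊢ C`. -/
theorem ISC.cut {K : Type} {c v : K → ℕ} (w : K → ℕ) (hw : ∀ κ, w κ ≤ 1)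
    {Γ Δ S : List (GTy K c v)} {A C : GTy K c v}
    (h1 : ISC w Γ A) (h2 : ISC w (Δ ++ A :: S) C) :
    ISC w (Δ ++ Γ ++ S) C := by
  obtain ⟨n₁, h1m⟩ := ISCAux.toISCm h1
  obtain ⟨n₂, h2m⟩ := ISCAux.toISCm h2
  have hT' : (↑(Δ ++ A :: S) : Multiset (GTy K c v)) = A ::ₘ ↑(Δ ++ S) :=
    Multiset.coe_eq_coe.mpr List.perm_middle
  obtain ⟨m, hm⟩ := ISCAux.cutM hw A n₁ n₂ ↑Γ ↑(Δ ++ S) h1m h2m hT'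
  refine ISCAux.ofISCm hm (Δ ++ Γ ++ S) ?_
  have hperm : (Δ ++ Γ ++ S).Perm (Γ ++ (Δ ++ S)) := by
    have h := (List.perm_append_comm (l₁ := Δ) (l₂ := Γ)).append_right S
    simpa [List.append_assoc] using h
  calc (↑(Δ ++ Γ ++ S) : Multiset (GTy K c v))
      = ↑(Γ ++ (Δ ++ S)) := Multiset.coe_eq_coe.mpr hperm
    _ = ↑Γ + ↑(Δ ++ S) := by rw [← Multiset.coe_add]
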